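/- Let B be a (real or complex) Banach space, T : B → B a bounded linear operator, and h ∈ B. Call a vector v ∈ B almost periodic if its orbit {T^n v : n ∈ ℕ} is precompact (has compact closure). Then the equation T f − f = h has an almost periodic solution f if and only if the set of partial sums {s_n = ∑_{k=0}^{n} T^k h : n ∈ ℕ} is precompact in B. Moreover, under this condition every solution of T f − f = h is almost periodic. -/

import Mathlib

/-- For a bounded linear operator `T` on a Banach space `B` (real or
complex) and `h ∈ B`, the equation `T f − f = h` has an almost periodic solution
(one with precompact orbit `{T^n f}`) iff the set of partial sums
`{∑_{k=0}^{n} T^k h}` is precompact; moreover, in this case every solution is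
almost periodic. -/
theorem almost_periodic_solution_iff_partial_sums_precompact
    {𝕜 : Type*} [RCLike 𝕜] {B : Type*} [NormedAddCommGroup B] [NormedSpace 𝕜 B]
    [CompleteSpace B] (T : B →L[𝕜] B) (h : B) :
    ((∃ f : B, T f - f = h ∧
        IsCompact (closure (Set.range fun n : ℕ => (T ^ n) f))) ↔
      IsCompact (closure (Set.range fun n : ℕ =>
        ∑ k ∈ Finset.range (n + 1), (T ^ k) h))) ∧
    (IsCompact (closure (Set.range fun n : ℕ =>
        ∑ k ∈ Finset.range (n + 1), (T ^ k) h)) →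
      ∀ f : B, T f - f = h →
        IsCompact (closure (Set.range fun n : ℕ => (T ^ n) f))) := by
  letI : NormedSpace ℝ B := NormedSpace.restrictScalars ℝ 𝕜 B
  letI : IsScalarTower ℝ 𝕜 B := ⟨fun r c x => by rw [Algebra.smul_def, mul_smul]; rfl⟩
  set s : ℕ → B := fun n => ∑ k ∈ Finset.range (n + 1), (T ^ k) h with hs_def
  have hk : ∀ k : ℕ, T ((T ^ k) h) = (T ^ (k + 1)) h := fun k => by rw [pow_succ']; rfl
  -- the orbit formula for any solution
  have orbit : ∀ f : B, T f - f = h →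
      ∀ n : ℕ, (T ^ n) f = f + ∑ k ∈ Finset.range n, (T ^ k) h := by
    intro f hf n
    induction n with
    | zero => simp
    | succ n ih =>
      have hTf : T f = f + h := by rw [← hf]; abel
      have hpow : (T ^ (n + 1)) f = T ((T ^ n) f) := by rw [pow_succ']; rfl
      rw [hpow, ih, map_add, hTf, map_sum,
        Finset.sum_range_succ' (fun k => (T ^ k) h) n]
      simp only [hk, pow_zero, ContinuousLinearMap.one_apply]
      abel
  have tb_of_compact : ∀ S : Set B, IsCompact (closure S) → TotallyBounded S :=
    fun S hS => hS.totallyBounded.subset subset_closure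
  have compact_of_tb : ∀ S : Set B, TotallyBounded S → IsCompact (closure S) :=
    fun S tb => TotallyBounded.isCompact_of_isClosed tb.closure isClosed_closure
  -- Part 2 : every solution is almost periodic
  have part2 : IsCompact (closure (Set.range s)) → ∀ f : B, T f - f = h →
      IsCompact (closure (Set.range fun n : ℕ => (T ^ n) f)) := by
    intro Hs f hf
    apply compact_of_tb
    have tb_ins : TotallyBounded (insert (0 : B) (Set.range s)) :=
      (tb_of_compact _ Hs).insert 0
    have tb_img : TotallyBounded ((fun x => f + x) '' insert (0 : B) (Set.range s)) :=
      tb_ins.image (uniformContinuous_const.add uniformContinuous_id)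
    refine tb_img.subset ?_
    rintro x ⟨n, rfl⟩
    cases n with
    | zero => exact ⟨0, Set.mem_insert _ _, by simp⟩
    | succ n =>
      exact ⟨s n, Set.mem_insert_of_mem _ ⟨n, rfl⟩, (orbit f hf (n + 1)).symm⟩
  -- Forward direction of the iff
  have fwd : (∃ f : B, T f - f = h ∧
      IsCompact (closure (Set.range fun n : ℕ => (T ^ n) f))) →
      IsCompact (closure (Set.range s)) := by
    rintro ⟨f, hf, hc⟩
    apply compact_of_tb
    have tb : TotallyBounded (Set.range fun n : ℕ => (T ^ n) f) := tb_of_compact _ hc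
    have tb2 : TotallyBounded ((fun x => x - f) '' Set.range fun n : ℕ => (T ^ n) f) :=
      tb.image (uniformContinuous_id.sub uniformContinuous_const)
    refine tb2.subset ?_
    rintro x ⟨n, rfl⟩
    refine ⟨(T ^ (n + 1)) f, ⟨n + 1, rfl⟩, ?_⟩
    show (T ^ (n + 1)) f - f = s n
    rw [orbit f hf (n + 1)]
    show f + s n - f = s n
    abel
  -- Backward direction : existence of a solution
  have bwd : IsCompact (closure (Set.range s)) →
      ∃ f : B, T f - f = h ∧
        IsCompact (closure (Set.range fun n : ℕ => (T ^ n) f)) := by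
    intro Hs
    suffices hsol : ∃ f : B, T f - f = h by
      obtain ⟨f, hf⟩ := hsol
      exact ⟨f, hf, part2 Hs f hf⟩
    obtain ⟨C, hC⟩ : ∃ C, ∀ x ∈ Set.range s, ‖x‖ ≤ C :=
      (Hs.isBounded.subset subset_closure).exists_norm_le
    have hCn : ∀ n : ℕ, ‖s n‖ ≤ C := fun n => hC (s n) ⟨n, rfl⟩
    set σ : ℕ → B := fun N => ((N : ℝ) + 1)⁻¹ • ∑ n ∈ Finset.range (N + 1), s n with hσ
    have hKc : IsCompact (closure (convexHull ℝ (Set.range s))) :=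
      compact_of_tb _ (totallyBounded_convexHull.2 (tb_of_compact _ Hs))
    have hmem : ∀ N, σ N ∈ closure (convexHull ℝ (Set.range s)) := by
      intro N
      apply subset_closure
      have hc : ((N : ℝ) + 1) ≠ 0 := by positivity
      have hmem' := (convex_convexHull ℝ (Set.range s)).sum_mem
        (t := Finset.range (N + 1)) (w := fun _ => ((N : ℝ) + 1)⁻¹) (z := fun n => s n)
        (fun i _ => by positivity)
        (by rw [Finset.sum_const, Finset.card_range, nsmul_eq_mul]; push_cast; field_simp)
        (fun i _ => subset_convexHull ℝ _ ⟨i, rfl⟩)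
      have : σ N = ∑ i ∈ Finset.range (N + 1), ((N : ℝ) + 1)⁻¹ • s i := by
        show ((N : ℝ) + 1)⁻¹ • ∑ n ∈ Finset.range (N + 1), s n = _
        rw [Finset.smul_sum]
      rwa [this]
    -- the key algebraic identity
    have hTs : ∀ n : ℕ, T (s n) = s (n + 1) - h := by
      intro n
      show T (∑ k ∈ Finset.range (n + 1), (T ^ k) h)
          = ∑ k ∈ Finset.range (n + 1 + 1), (T ^ k) h - h
      rw [map_sum, Finset.sum_range_succ' (fun k => (T ^ k) h) (n + 1)]
      simp only [pow_zero, ContinuousLinearMap.one_apply, add_sub_cancel_right]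
      exact Finset.sum_congr rfl fun k _ => hk k
    have key : ∀ N : ℕ, T (σ N) - σ N + h = ((N : ℝ) + 1)⁻¹ • (s (N + 1) - s 0) := by
      intro N
      have hc : ((N : ℝ) + 1) ≠ 0 := by positivity
      have e1 : T (σ N) - σ N
          = ((N : ℝ) + 1)⁻¹ • ∑ n ∈ Finset.range (N + 1), (T (s n) - s n) := by
        rw [hσ]
        rw [T.map_smul_of_tower, map_sum, ← smul_sub, ← Finset.sum_sub_distrib]
      have e2 : ∀ n ∈ Finset.range (N + 1), T (s n) - s n = (s (n + 1) - s n) - h :=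
        fun n _ => by rw [hTs n]; abel
      rw [e1, Finset.sum_congr rfl e2, Finset.sum_sub_distrib,
        Finset.sum_range_sub (fun n => s n), Finset.sum_const, Finset.card_range,
        smul_sub, ← Nat.cast_smul_eq_nsmul ℝ, smul_smul]
      push_cast
      rw [inv_mul_cancel₀ hc, one_smul]
      abel
    have hbound : Filter.Tendsto (fun N : ℕ => T (σ N) - σ N + h) Filter.atTop (nhds 0) := by
      have hlim : Filter.Tendsto (fun N : ℕ => ((N : ℝ) + 1)⁻¹ * (2 * C))
          Filter.atTop (nhds 0) := by
        have := tendsto_one_div_add_atTop_nhds_zero_nat.mul_const (2 * C)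
        simpa [one_div] using this
      apply squeeze_zero_norm _ hlim
      intro N
      rw [key N, norm_smul]
      have h1 : ‖(((N : ℝ) + 1)⁻¹ : ℝ)‖ = ((N : ℝ) + 1)⁻¹ := by
        rw [Real.norm_eq_abs, abs_of_nonneg]; positivity
      rw [h1]
      have h2 : ‖s (N + 1) - s 0‖ ≤ 2 * C := by
        calc ‖s (N + 1) - s 0‖ ≤ ‖s (N + 1)‖ + ‖s 0‖ := norm_sub_le _ _
          _ ≤ C + C := add_le_add (hCn _) (hCn _)
          _ = 2 * C := by ring
      have h3 : (0 : ℝ) ≤ ((N : ℝ) + 1)⁻¹ := by positivity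
      exact mul_le_mul_of_nonneg_left h2 h3
    obtain ⟨g, -, φ, hφ, hg⟩ := hKc.tendsto_subseq hmem
    have hcont : Continuous fun x : B => T x - x + h :=
      (T.continuous.sub continuous_id).add continuous_const
    have hlim1 : Filter.Tendsto (fun j : ℕ => T (σ (φ j)) - σ (φ j) + h)
        Filter.atTop (nhds (T g - g + h)) := (hcont.tendsto g).comp hg
    have hlim2 : Filter.Tendsto (fun j : ℕ => T (σ (φ j)) - σ (φ j) + h)
        Filter.atTop (nhds 0) := hbound.comp hφ.tendsto_atTop
    have heq : T g - g + h = 0 := tendsto_nhds_unique hlim1 hlim2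
    refine ⟨-g, ?_⟩
    have : T g - g = -h := eq_neg_of_add_eq_zero_left heq
    rw [map_neg]
    rw [show -T g - -g = -(T g - g) by abel, this, neg_neg]
  exact ⟨⟨fwd, bwd⟩, part2⟩
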